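/- The resistance distance matrix of the prism K_n × K_2 has spectrum: (5n² + 2n − 4)/(n(n+2)) with multiplicity 1, −2/n with multiplicity n−1, −1 with multiplicity 1, and −2/(n+2) with multiplicity n−1; consequently E_R(K_n × K_2) = (10n² + 4n − 8)/(n(n+2)) and K_n × K_2 is (5n² + 2n − 4)/(n(n+2))-resistance regular. -/

import Mathlib

open Matrix BigOperators Finset

noncomputable def allOnes (V : Type*) : Matrix V V ℝ := Matrix.of fun _ _ => 1

/-- The resistance distance matrix of a connected graph, via the matrix
`X = (L + (1/n)J)⁻¹`: `r_ij = X_ii + X_jj - 2X_ij`. -/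
noncomputable def resistMatrix {V : Type*} [Fintype V] [DecidableEq V]
    (G : SimpleGraph V) [DecidableRel G.Adj] : Matrix V V ℝ :=
  Matrix.of fun i j =>
    (G.lapMatrix ℝ + (Fintype.card V : ℝ)⁻¹ • allOnes V)⁻¹ i i +
    (G.lapMatrix ℝ + (Fintype.card V : ℝ)⁻¹ • allOnes V)⁻¹ j j -
    2 * (G.lapMatrix ℝ + (Fintype.card V : ℝ)⁻¹ • allOnes V)⁻¹ i j

/-- `W` is the Moore-Penrose inverse of `L`. -/
def IsMoorePenrose {V : Type*} [Fintype V] [DecidableEq V] (L W : Matrix V V ℝ) : Prop :=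
  L * W * L = L ∧ W * L * W = W ∧ (L * W)ᵀ = L * W ∧ (W * L)ᵀ = W * L

/-- Resistance degree `R_i`. -/
noncomputable def rdeg {V : Type*} [Fintype V] [DecidableEq V]
    (G : SimpleGraph V) [DecidableRel G.Adj] (i : V) : ℝ :=
  ∑ j, resistMatrix G i j

/-- Second resistance degree `T_i`. -/
noncomputable def rdeg2 {V : Type*} [Fintype V] [DecidableEq V]
    (G : SimpleGraph V) [DecidableRel G.Adj] (i : V) : ℝ :=
  ∑ j, resistMatrix G i j * rdeg G j

/-- The prism `Kₙ × K₂` (Cartesian product of the complete graph `Kₙ` with `K₂`). -/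
def prism (n : ℕ) : SimpleGraph (Fin n × Fin 2) where
  Adj v w := (v.1 = w.1 ∧ v.2 ≠ w.2) ∨ (v.1 ≠ w.1 ∧ v.2 = w.2)
  symm := ⟨fun _ _ h => h.imp (fun h' => ⟨h'.1.symm, h'.2.symm⟩)
    (fun h' => ⟨h'.1.symm, h'.2.symm⟩)⟩
  loopless := ⟨fun v h => h.elim (fun h' => h'.2 rfl) (fun h' => h'.1 rfl)⟩

instance (n : ℕ) : DecidableRel (prism n).Adj := fun v w =>
  inferInstanceAs (Decidable ((v.1 = w.1 ∧ v.2 ≠ w.2) ∨ (v.1 ≠ w.1 ∧ v.2 = w.2)))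


namespace PrismAux
open Polynomial Kronecker

variable (n : ℕ)

noncomputable def Jn : Matrix (Fin n) (Fin n) ℝ := Matrix.of fun _ _ => 1
noncomputable def E0 : Matrix (Fin n) (Fin n) ℝ :=
  Matrix.diagonal fun j => if j.val = 0 then 1 else 0
noncomputable def Am : Matrix (Fin n) (Fin n) ℝ := Matrix.of fun i _ => if i.val = 0 then 1 else 0
noncomputable def Bm : Matrix (Fin n) (Fin n) ℝ := Matrix.of fun _ j => if j.val = 0 then 1 else 0

lemma sum_indic (hn : 0 < n) : (∑ k : Fin n, if k.val = 0 then (1:ℝ) else 0) = 1 := by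
  have h : ∀ k : Fin n, (if k.val = 0 then (1:ℝ) else 0) = if k = ⟨0, hn⟩ then (1:ℝ) else 0 := by
    intro k
    have : k.val = 0 ↔ k = ⟨0, hn⟩ := ⟨fun h => Fin.ext h, fun h => h ▸ rfl⟩
    simp [this]
  rw [Finset.sum_congr rfl fun k _ => h k, Finset.sum_ite_eq' univ _ (fun _ => (1:ℝ))]
  simp

lemma r1 : Jn n * Jn n = (n : ℝ) • Jn n := by
  ext i j; simp [Jn, Matrix.mul_apply]

lemma r2 : E0 n * E0 n = E0 n := by
  ext i j
  simp only [E0, Matrix.diagonal_mul_diagonal]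
  by_cases h : i = j <;> simp [h] <;> by_cases h2 : (j : ℕ) = 0 <;> simp [h2]

lemma r3 : E0 n * Jn n = Am n := by
  ext i j; simp [E0, Jn, Am, Matrix.diagonal_mul]

lemma r4 : Jn n * E0 n = Bm n := by
  ext i j; simp [E0, Jn, Bm, Matrix.mul_diagonal]

lemma r5 : Am n * Jn n = (n : ℝ) • Am n := by
  ext i j; simp [Am, Jn, Matrix.mul_apply, mul_comm]

lemma r6 (hn : 0 < n) : Jn n * Am n = Jn n := by
  ext i j; simp [Am, Jn, Matrix.mul_apply, sum_indic n hn]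

lemma r7 (hn : 0 < n) : Bm n * Jn n = Jn n := by
  ext i j; simp [Bm, Jn, Matrix.mul_apply, sum_indic n hn]

lemma r8 : Bm n * E0 n = Bm n := by
  ext i j
  simp only [E0, Bm, Matrix.mul_diagonal, of_apply]
  by_cases h : (j : ℕ) = 0 <;> simp [h]

lemma r9 (hn : 0 < n) : Bm n * Am n = Jn n := by
  ext i j
  simp only [Bm, Am, Jn, Matrix.mul_apply, of_apply]
  have h : ∀ k : Fin n, ((if (k:ℕ) = 0 then (1:ℝ) else 0) * if (k:ℕ) = 0 then (1:ℝ) else 0)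
      = if (k:ℕ) = 0 then (1:ℝ) else 0 := by intro k; by_cases h : (k:ℕ) = 0 <;> simp [h]
  rw [Finset.sum_congr rfl fun k _ => h k, sum_indic n hn]

lemma r10 : Am n * E0 n = E0 n := by
  ext i j
  simp only [E0, Am, Matrix.mul_diagonal, of_apply, Matrix.diagonal_apply]
  by_cases hj : (j : ℕ) = 0
  · by_cases hi : (i : ℕ) = 0
    · have : i = j := Fin.ext (hi.trans hj.symm)
      simp [hi, hj, this]
    · have : ¬ i = j := fun h => hi (h ▸ hj)
      simp [hi, hj, this]
  · by_cases hij : i = j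
    · subst hij; simp [hj]
    · simp [hij, hj]

lemma r11 (hn : 0 < n) : Am n * Am n = Am n := by
  ext i j
  simp only [Am, Matrix.mul_apply, of_apply, ← Finset.mul_sum, sum_indic n hn, mul_one]

lemma r12 : E0 n * Am n = Am n := by
  ext i j
  simp only [E0, Am, Matrix.diagonal_mul, of_apply]
  by_cases hi : (i : ℕ) = 0 <;> simp [hi]

lemma r13 : Jn n * Bm n = (n : ℝ) • Bm n := by
  ext i j; simp [Bm, Jn, Matrix.mul_apply]

noncomputable def sg : Matrix (Fin 2) (Fin 2) ℝ := Matrix.of fun s t => if s = t then 0 else 1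
noncomputable def Wm : Matrix (Fin 2) (Fin 2) ℝ :=
  Matrix.of fun s t => if t = 0 then 1 else if s = 0 then 1 else -1
noncomputable def Wi : Matrix (Fin 2) (Fin 2) ℝ :=
  Matrix.of fun s t => if s = 0 then 1/2 else if t = 0 then 1/2 else -(1/2)
noncomputable def Sg2 : Matrix (Fin 2) (Fin 2) ℝ := Matrix.diagonal fun t => if t = 0 then 1 else -1

lemma sg_sg : sg * sg = 1 := by
  ext s t
  fin_cases s <;> fin_cases t <;>
    simp [sg, Matrix.mul_apply, Fin.sum_univ_two, Matrix.one_apply]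

lemma sg_Wm : sg * Wm = Wm * Sg2 := by
  ext s t
  fin_cases s <;> fin_cases t <;>
    simp [sg, Wm, Sg2, Matrix.mul_apply, Fin.sum_univ_two]

lemma Wm_Wi : Wm * Wi = 1 := by
  ext s t
  fin_cases s <;> fin_cases t <;>
    simp [Wm, Wi, Matrix.mul_apply, Fin.sum_univ_two, Matrix.one_apply] <;> norm_num

noncomputable def genJ (x y : ℝ) : Matrix (Fin n) (Fin n) ℝ :=
  x • (1 : Matrix (Fin n) (Fin n) ℝ) + y • Jn n

lemma genJ_mul (x y x' y' : ℝ) :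
    genJ n x y * genJ n x' y' = genJ n (x * x') (x * y' + y * x' + n * (y * y')) := by
  simp only [genJ, add_mul, mul_add, Matrix.smul_mul, Matrix.mul_smul, one_mul, mul_one, r1,
    smul_smul]
  match_scalars <;> ring

noncomputable def Vm : Matrix (Fin n) (Fin n) ℝ := 1 + Bm n - Am n
noncomputable def Vi : Matrix (Fin n) (Fin n) ℝ :=
  1 - (n : ℝ)⁻¹ • Jn n - E0 n + ((n : ℝ)⁻¹ * 2) • Am n

lemma Vm_Vi (hn : 0 < n) : Vm n * Vi n = 1 := by
  have hne : (n : ℝ) ≠ 0 := Nat.cast_ne_zero.mpr hn.ne'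
  simp only [Vm, Vi, mul_add, mul_sub, add_mul, sub_mul, Matrix.smul_mul, Matrix.mul_smul,
    one_mul, mul_one, r1, r2, r3, r4, r5, r6 n hn, r7 n hn, r8, r9 n hn, r10, r11 n hn, r12, r13,
    smul_smul]
  match_scalars <;> (try field_simp) <;> (try ring) <;> (try norm_num)

lemma Jn_Vm (hn : 0 < n) : Jn n * Vm n = (n : ℝ) • (Vm n * E0 n) := by
  simp only [Vm, mul_add, mul_sub, add_mul, sub_mul, one_mul, mul_one,
    r2, r3, r4, r6 n hn, r8, r10, r13]
  match_scalars <;> ring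

noncomputable def al : ℝ := 2 * ((n:ℝ) + 1) / ((n:ℝ) * ((n:ℝ) + 2))
noncomputable def be : ℝ := 3 / ((n:ℝ) + 2)
noncomputable def ga : ℝ := (3 * (n:ℝ) + 2) / ((n:ℝ) * ((n:ℝ) + 2))
noncomputable def xa : ℝ := (1 / (n:ℝ) + 1 / ((n:ℝ) + 2)) / 2
noncomputable def xb : ℝ := (((n:ℝ) - 1) / (n:ℝ) ^ 2 + 1 / (2 * ((n:ℝ) + 2))) / 2
noncomputable def xc : ℝ := (1 / (n:ℝ) - 1 / ((n:ℝ) + 2)) / 2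
noncomputable def xd : ℝ := (((n:ℝ) - 1) / (n:ℝ) ^ 2 - 1 / (2 * ((n:ℝ) + 2))) / 2

noncomputable def Mker : Matrix (Fin n × Fin 2) (Fin n × Fin 2) ℝ :=
  genJ n ((n:ℝ) + 1) (-1 + (2 * (n:ℝ))⁻¹) ⊗ₖ (1 : Matrix (Fin 2) (Fin 2) ℝ)
    + genJ n (-1) ((2 * (n:ℝ))⁻¹) ⊗ₖ sg
noncomputable def Xm : Matrix (Fin n × Fin 2) (Fin n × Fin 2) ℝ :=
  genJ n (xa n) (xb n) ⊗ₖ (1 : Matrix (Fin 2) (Fin 2) ℝ) + genJ n (xc n) (xd n) ⊗ₖ sg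
noncomputable def Rm : Matrix (Fin n × Fin 2) (Fin n × Fin 2) ℝ :=
  genJ n (-(al n)) (al n) ⊗ₖ (1 : Matrix (Fin 2) (Fin 2) ℝ) + genJ n (be n - ga n) (ga n) ⊗ₖ sg
noncomputable def Pm : Matrix (Fin n × Fin 2) (Fin n × Fin 2) ℝ := Vm n ⊗ₖ Wm
noncomputable def Pinv : Matrix (Fin n × Fin 2) (Fin n × Fin 2) ℝ := Vi n ⊗ₖ Wi
noncomputable def Dm : Matrix (Fin n × Fin 2) (Fin n × Fin 2) ℝ :=
  ((-(al n)) • (1 : Matrix (Fin n) (Fin n) ℝ) + (al n * n) • E0 n) ⊗ₖ (1 : Matrix (Fin 2) (Fin 2) ℝ)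
    + ((be n - ga n) • (1 : Matrix (Fin n) (Fin n) ℝ) + (ga n * n) • E0 n) ⊗ₖ Sg2

lemma kron_comb (G H : Matrix (Fin n) (Fin n) ℝ) (hG : G = 1) (hH : H = 0) :
    G ⊗ₖ (1 : Matrix (Fin 2) (Fin 2) ℝ) + H ⊗ₖ sg = 1 := by
  subst hG; subst hH
  rw [Matrix.zero_kronecker, add_zero, Matrix.one_kronecker_one]

lemma Mker_Xm (hn : 2 ≤ n) : Mker n * Xm n = 1 := by
  have h0 : (0:ℝ) < (n:ℝ) := by exact_mod_cast Nat.lt_of_lt_of_le Nat.zero_lt_two hn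
  have hne : (n:ℝ) ≠ 0 := ne_of_gt h0
  have hne2 : (n:ℝ) + 2 ≠ 0 := by positivity
  rw [Mker, Xm, add_mul, mul_add, mul_add, ← Matrix.mul_kronecker_mul, ← Matrix.mul_kronecker_mul,
    ← Matrix.mul_kronecker_mul, ← Matrix.mul_kronecker_mul]
  simp only [one_mul, mul_one, sg_sg]
  rw [genJ_mul, genJ_mul, genJ_mul, genJ_mul,
    show ∀ (A B C D : Matrix (Fin n × Fin 2) (Fin n × Fin 2) ℝ),
      A + B + (C + D) = (A + D) + (B + C) from fun A B C D => by abel,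
    ← Matrix.add_kronecker, ← Matrix.add_kronecker]
  apply kron_comb
  · simp only [genJ, xa, xb, xc, xd]
    match_scalars <;> field_simp <;> ring
  · simp only [genJ, xa, xb, xc, xd]
    match_scalars <;> field_simp <;> ring

lemma Pm_Pinv (hn : 0 < n) : Pm n * Pinv n = 1 := by
  rw [Pm, Pinv, ← Matrix.mul_kronecker_mul, Vm_Vi n hn, Wm_Wi, Matrix.one_kronecker_one]

lemma genJ_Vm (hn : 0 < n) (x y : ℝ) :
    genJ n x y * Vm n = Vm n * (x • (1 : Matrix (Fin n) (Fin n) ℝ) + (y * n) • E0 n) := by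
  simp only [genJ, add_mul, mul_add, Matrix.smul_mul, Matrix.mul_smul, one_mul, mul_one,
    Jn_Vm n hn, smul_smul]

lemma Rm_Pm (hn : 0 < n) : Rm n * Pm n = Pm n * Dm n := by
  rw [Rm, Pm, Dm, add_mul, ← Matrix.mul_kronecker_mul, ← Matrix.mul_kronecker_mul,
    genJ_Vm n hn, genJ_Vm n hn, one_mul, sg_Wm]
  conv_rhs => rw [mul_add, ← Matrix.mul_kronecker_mul, ← Matrix.mul_kronecker_mul]
  rw [mul_one]

noncomputable def lam1 : ℝ := (5 * (n : ℝ) ^ 2 + 2 * n - 4) / (n * (n + 2))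
noncomputable def lam2 : ℝ := -2 / (n : ℝ)
noncomputable def lam4 : ℝ := -2 / ((n : ℝ) + 2)

noncomputable def dfun : Fin n × Fin 2 → ℝ := fun v =>
  if v.2 = 0 then (if v.1.val = 0 then lam1 n else lam2 n)
  else (if v.1.val = 0 then (-1 : ℝ) else lam4 n)

lemma Dm_diag (hn : 2 ≤ n) : Dm n = Matrix.diagonal (dfun n) := by
  have h0 : (0:ℝ) < (n:ℝ) := by exact_mod_cast Nat.lt_of_lt_of_le Nat.zero_lt_two hn
  have hne : (n:ℝ) ≠ 0 := ne_of_gt h0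
  have hne2 : (n:ℝ) + 2 ≠ 0 := by positivity
  ext ⟨i, s⟩ ⟨j, t⟩
  by_cases hij : i = j
  · subst hij
    by_cases hst : s = t
    · subst hst
      rw [Matrix.diagonal_apply_eq]
      simp only [Dm, Matrix.add_apply, Matrix.kroneckerMap_apply, Matrix.smul_apply,
        Matrix.add_apply, Matrix.one_apply_eq, E0, Sg2, Matrix.diagonal_apply_eq, dfun,
        smul_eq_mul]
      by_cases hi : (i : ℕ) = 0 <;> by_cases hs : s = 0 <;>
        simp only [hi, hs, if_true, if_false, reduceIte] <;>
        (simp only [al, be, ga, lam1, lam2, lam4]; field_simp; ring)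
    · have hne' : ((i, s) : Fin n × Fin 2) ≠ (i, t) := by simp [hst]
      rw [Matrix.diagonal_apply_ne _ hne']
      simp [Dm, Sg2, Matrix.one_apply, Matrix.diagonal_apply, hst]
  · have hne' : ((i, s) : Fin n × Fin 2) ≠ (j, t) := by simp [hij]
    rw [Matrix.diagonal_apply_ne _ hne']
    simp [Dm, E0, Matrix.one_apply, Matrix.diagonal_apply, hij]

end PrismAux

namespace PrismAux
open Polynomial Kronecker

lemma charpoly_diag {m : Type*} [Fintype m] [DecidableEq m] (d : m → ℝ) :
    (Matrix.diagonal d).charpoly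
      = (((univ : Finset m).val.map d).map fun r => X - C r).prod := by
  have h : charmatrix (Matrix.diagonal d)
      = Matrix.diagonal fun i => (X : ℝ[X]) - C (d i) := by
    ext i j
    rcases eq_or_ne i j with rfl | h
    · simp [charmatrix_apply_eq]
    · simp [charmatrix_apply_ne _ _ _ h, Matrix.diagonal_apply_ne _ h]
  rw [Matrix.charpoly, h, Matrix.det_diagonal, Multiset.map_map,
    Finset.prod_eq_multiset_prod]
  rfl

lemma charpoly_conj {m : Type*} [Fintype m] [DecidableEq m] (P A Q : Matrix m m ℝ)
    (h : P * Q = 1) : (P * A * Q).charpoly = A.charpoly := by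
  set Pc := (C : ℝ →+* ℝ[X]).mapMatrix P with hPc
  set Qc := (C : ℝ →+* ℝ[X]).mapMatrix Q with hQc
  have hPQ : Pc * Qc = 1 := by rw [hPc, hQc, ← _root_.map_mul, h, _root_.map_one]
  have hscalar : Pc * (Matrix.scalar m (X : ℝ[X])) * Qc = Matrix.scalar m (X : ℝ[X]) := by
    rw [← (Matrix.scalar_commute (X : ℝ[X]) (fun r' => Commute.all _ _) Pc).eq,
      mul_assoc, hPQ, mul_one]
  have e1 : Pc * charmatrix A * Qc = charmatrix (P * A * Q) := by
    show _ = Matrix.scalar m (X : ℝ[X]) - (C : ℝ →+* ℝ[X]).mapMatrix (P * A * Q)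
    rw [_root_.map_mul, _root_.map_mul, ← hPc, ← hQc, charmatrix, mul_sub, sub_mul, hscalar]
  rw [Matrix.charpoly, ← e1, Matrix.det_mul, Matrix.det_mul, Matrix.charpoly]
  have hdet : Pc.det * Qc.det = 1 := by rw [← Matrix.det_mul, hPQ, Matrix.det_one]
  calc Pc.det * (charmatrix A).det * Qc.det
      = Pc.det * Qc.det * (charmatrix A).det := by ring
    _ = (charmatrix A).det := by rw [hdet, one_mul]

lemma charpoly_herm {m : Type*} [Fintype m] [DecidableEq m] {A : Matrix m m ℝ}
    (hA : A.IsHermitian) :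
    A.charpoly = (((univ : Finset m).val.map hA.eigenvalues).map fun r => X - C r).prod := by
  have hU : (hA.eigenvectorUnitary : Matrix m m ℝ) * star (hA.eigenvectorUnitary : Matrix m m ℝ)
      = 1 := Unitary.mul_star_self_of_mem hA.eigenvectorUnitary.2
  conv_lhs => rw [hA.spectral_theorem]; simp only [Unitary.conjStarAlgAut_apply, Unitary.coe_star]
  rw [charpoly_conj _ _ _ hU]
  rw [show (RCLike.ofReal ∘ hA.eigenvalues : m → ℝ) = hA.eigenvalues by
    funext i; simp [RCLike.ofReal_real_eq_id]]
  exact charpoly_diag _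

lemma map_univ_prod {β : Type*} (n : ℕ) (f : Fin n × Fin 2 → β) :
    ((univ : Finset (Fin n × Fin 2)).val.map f)
      = ((univ : Finset (Fin n)).val.map fun i => f (i, 0))
        + (univ : Finset (Fin n)).val.map fun i => f (i, 1) := by
  have h : (univ : Finset (Fin n × Fin 2)).val
      = ((univ : Finset (Fin n)) ×ˢ (univ : Finset (Fin 2))).val := by
    rw [Finset.univ_product_univ]
  rw [h, Finset.product_val, show (univ : Finset (Fin 2)).val = 0 ::ₘ 1 ::ₘ 0 by decide,
    Multiset.product_cons, Multiset.product_cons, Multiset.product_zero, add_zero,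
    Multiset.map_add, Multiset.map_map, Multiset.map_map]
  rfl

lemma map_if_zero {n : ℕ} (hn : 0 < n) (a b : ℝ) :
    ((univ : Finset (Fin n)).val.map fun j => if j.val = 0 then a else b)
      = a ::ₘ Multiset.replicate (n - 1) b := by
  have h0 : (⟨0, hn⟩ : Fin n) ∈ (univ : Finset (Fin n)).val := Finset.mem_val.mpr (Finset.mem_univ _)
  rw [← Multiset.cons_erase h0, Multiset.map_cons]
  congr 1
  have herase : (univ : Finset (Fin n)).val.erase ⟨0, hn⟩
      = ((univ : Finset (Fin n)).erase ⟨0, hn⟩).val := by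
    rw [Finset.erase_val]
  rw [herase]
  rw [Multiset.map_congr rfl (fun x hx => ?_)]
  · rw [Multiset.map_const']
    congr 1
    have h : ((univ : Finset (Fin n)).erase ⟨0, hn⟩).card = n - 1 := by
      rw [Finset.card_erase_of_mem (Finset.mem_univ _), Finset.card_univ, Fintype.card_fin]
    simpa using h
  · have hx' : x ≠ ⟨0, hn⟩ := (Finset.mem_erase.mp (Finset.mem_val.mp hx)).1
    have hv : ¬ (x.val = 0) := fun h => hx' (Fin.ext h)
    simp [hv]

end PrismAux

namespace PrismAux
open Polynomial Kronecker

lemma prism_adj (n : ℕ) (v w : Fin n × Fin 2) :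
    (prism n).Adj v w ↔ ((v.1 = w.1 ∧ v.2 ≠ w.2) ∨ (v.1 ≠ w.1 ∧ v.2 = w.2)) := Iff.rfl

lemma prism_degree (n : ℕ) (v : Fin n × Fin 2) : (prism n).degree v = n := by
  obtain ⟨i, s⟩ := v
  rw [SimpleGraph.degree, SimpleGraph.neighborFinset_eq_filter, Finset.card_filter]
  rw [Fintype.sum_prod_type]
  have hrow : ∀ j : Fin n, (∑ t : Fin 2, if (prism n).Adj (i, s) (j, t) then 1 else 0) = 1 := by
    intro j
    by_cases hj : i = j
    · subst hj
      simp only [prism_adj, ne_eq, not_true_eq_false, and_false, false_or, false_and, or_false,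
        true_and, and_true, not_false_eq_true]
      rw [Fin.sum_univ_two]
      fin_cases s <;> simp
    · simp only [prism_adj, hj, ne_eq, false_and, false_or, true_and, not_false_eq_true]
      rw [Fin.sum_univ_two]
      fin_cases s <;> simp
  rw [Finset.sum_congr rfl fun j _ => hrow j]
  simp

lemma Mker_eq (n : ℕ) (hn : 2 ≤ n) :
    (prism n).lapMatrix ℝ
        + ((Fintype.card (Fin n × Fin 2) : ℝ))⁻¹ • allOnes (Fin n × Fin 2) = Mker n := by
  have h0 : (0:ℝ) < (n:ℝ) := by exact_mod_cast Nat.lt_of_lt_of_le Nat.zero_lt_two hn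
  have hne : (n:ℝ) ≠ 0 := ne_of_gt h0
  have hcard : ((Fintype.card (Fin n × Fin 2) : ℝ)) = 2 * (n:ℝ) := by
    simp [Fintype.card_prod]; ring
  ext ⟨i, s⟩ ⟨j, t⟩
  simp only [Matrix.add_apply, Matrix.smul_apply, allOnes, Matrix.of_apply, smul_eq_mul, mul_one,
    SimpleGraph.lapMatrix, Matrix.sub_apply, SimpleGraph.degMatrix, SimpleGraph.adjMatrix_apply,
    Matrix.diagonal_apply, prism_degree, hcard, prism_adj,
    Mker, genJ, Jn, sg, Matrix.kroneckerMap_apply, Matrix.one_apply]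
  by_cases hij : i = j <;> by_cases hst : s = t <;>
    simp [hij, hst, Prod.ext_iff] <;> field_simp <;> ring

lemma res_eq (n : ℕ) (hn : 2 ≤ n) : resistMatrix (prism n) = Rm n := by
  have h0 : (0:ℝ) < (n:ℝ) := by exact_mod_cast Nat.lt_of_lt_of_le Nat.zero_lt_two hn
  have hne : (n:ℝ) ≠ 0 := ne_of_gt h0
  have hne2 : (n:ℝ) + 2 ≠ 0 := by positivity
  have hXinv : ((prism n).lapMatrix ℝ
      + ((Fintype.card (Fin n × Fin 2) : ℝ))⁻¹ • allOnes (Fin n × Fin 2))⁻¹ = Xm n :=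
    Matrix.inv_eq_right_inv (by rw [Mker_eq n hn]; exact Mker_Xm n hn)
  ext ⟨i, s⟩ ⟨j, t⟩
  simp only [resistMatrix, Matrix.of_apply]
  rw [hXinv]
  simp only [Xm, Rm, genJ, Jn, sg, Matrix.kroneckerMap_apply, Matrix.add_apply,
    Matrix.smul_apply, Matrix.one_apply, Matrix.of_apply, smul_eq_mul]
  by_cases hij : i = j <;> by_cases hst : s = t <;>
    simp only [hij, hst, if_true, if_false, reduceIte, mul_one, mul_zero] <;>
    (simp only [al, be, ga, xa, xb, xc, xd]; field_simp; ring)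

end PrismAux


theorem resistance_spectrum_prism (n : ℕ) (hn : 2 ≤ n)
    (hR : (resistMatrix (prism n)).IsHermitian) :
    Multiset.map hR.eigenvalues Finset.univ.val =
      ((5 * (n : ℝ) ^ 2 + 2 * n - 4) / (n * (n + 2))) ::ₘ
        (Multiset.replicate (n - 1) (-2 / (n : ℝ)) +
          (-1 : ℝ) ::ₘ Multiset.replicate (n - 1) (-2 / ((n : ℝ) + 2))) ∧
    (∑ v, |hR.eigenvalues v|) = (10 * (n : ℝ) ^ 2 + 4 * n - 8) / (n * (n + 2)) ∧
    (∀ v, rdeg (prism n) v = (5 * (n : ℝ) ^ 2 + 2 * n - 4) / (n * (n + 2))) := by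
  classical
  open PrismAux Polynomial in
  have hn0 : 0 < n := by omega
  have h0 : (0:ℝ) < (n:ℝ) := by exact_mod_cast hn0
  have h2 : (2:ℝ) ≤ (n:ℝ) := by exact_mod_cast hn
  have hne : (n:ℝ) ≠ 0 := ne_of_gt h0
  have hne2 : (n:ℝ) + 2 ≠ 0 := by positivity
  have hres := PrismAux.res_eq n hn
  have hc1 : (resistMatrix (prism n)).charpoly
      = ((Finset.univ.val.map hR.eigenvalues).map fun r => X - C r).prod :=
    PrismAux.charpoly_herm hR
  have hRmPDP : PrismAux.Rm n = PrismAux.Pm n * PrismAux.Dm n * PrismAux.Pinv n := by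
    calc PrismAux.Rm n = PrismAux.Rm n * (PrismAux.Pm n * PrismAux.Pinv n) := by
          rw [PrismAux.Pm_Pinv n hn0, mul_one]
      _ = (PrismAux.Rm n * PrismAux.Pm n) * PrismAux.Pinv n := by rw [mul_assoc]
      _ = PrismAux.Pm n * PrismAux.Dm n * PrismAux.Pinv n := by rw [PrismAux.Rm_Pm n hn0]
  have hc2 : (resistMatrix (prism n)).charpoly
      = ((Finset.univ.val.map (PrismAux.dfun n)).map fun r => X - C r).prod := by
    rw [hres, hRmPDP, PrismAux.charpoly_conj _ _ _ (PrismAux.Pm_Pinv n hn0),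
      PrismAux.Dm_diag n hn, PrismAux.charpoly_diag]
  have hmult : Multiset.map hR.eigenvalues Finset.univ.val
      = Multiset.map (PrismAux.dfun n) Finset.univ.val := by
    have heq := hc1.symm.trans hc2
    have h3 := congrArg Polynomial.roots heq
    rwa [Polynomial.roots_multiset_prod_X_sub_C, Polynomial.roots_multiset_prod_X_sub_C] at h3
  have e0 : (fun i : Fin n => PrismAux.dfun n (i, 0))
      = fun i => if i.val = 0 then PrismAux.lam1 n else PrismAux.lam2 n := by
    funext i; simp [PrismAux.dfun]
  have e1 : (fun i : Fin n => PrismAux.dfun n (i, 1))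
      = fun i => if i.val = 0 then (-1 : ℝ) else PrismAux.lam4 n := by
    funext i; simp [PrismAux.dfun]
  have hdval : Multiset.map (PrismAux.dfun n) Finset.univ.val
      = ((5 * (n : ℝ) ^ 2 + 2 * n - 4) / (n * (n + 2))) ::ₘ
        (Multiset.replicate (n - 1) (-2 / (n : ℝ)) +
          (-1 : ℝ) ::ₘ Multiset.replicate (n - 1) (-2 / ((n : ℝ) + 2))) := by
    rw [PrismAux.map_univ_prod n (PrismAux.dfun n), e0, e1, PrismAux.map_if_zero hn0,
      PrismAux.map_if_zero hn0, Multiset.cons_add]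
    rfl
  have hspec := hmult.trans hdval
  refine ⟨hspec, ?_, ?_⟩
  · have hsum : (∑ v, |hR.eigenvalues v|)
        = ((Multiset.map hR.eigenvalues Finset.univ.val).map fun x => |x|).sum := by
      rw [Multiset.map_map, Finset.sum_eq_multiset_sum]
      rfl
    rw [hsum, hspec]
    simp only [Multiset.map_cons, Multiset.map_add, Multiset.map_replicate,
      Multiset.sum_cons, Multiset.sum_add, Multiset.sum_replicate]
    have ha1 : |(5 * (n:ℝ)^2 + 2*n - 4) / (n * (n + 2))|
        = (5 * (n:ℝ)^2 + 2*n - 4) / (n * (n + 2)) :=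
      abs_of_nonneg (div_nonneg (by nlinarith) (by positivity))
    have ha2 : |(-2 : ℝ) / (n:ℝ)| = 2 / (n:ℝ) := by
      rw [abs_div, abs_of_pos h0]; norm_num
    have ha4 : |(-2 : ℝ) / ((n:ℝ) + 2)| = 2 / ((n:ℝ) + 2) := by
      rw [abs_div, abs_of_pos (by positivity : (0:ℝ) < (n:ℝ) + 2)]; norm_num
    have hcast : ((n - 1 : ℕ) : ℝ) = (n : ℝ) - 1 := by
      rw [Nat.cast_sub (by omega : 1 ≤ n)]; norm_num
    rw [ha1, ha2, ha4]
    simp only [nsmul_eq_mul, hcast, abs_neg, abs_one]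
    field_simp
    ring
  · intro v
    obtain ⟨i, s⟩ := v
    have key : ∀ (c d : ℝ), ∑ j : Fin n, (c * (if i = j then (1:ℝ) else 0) + d) = c + n * d := by
      intro c d
      rw [Finset.sum_add_distrib, Finset.sum_const, Finset.card_univ, Fintype.card_fin,
        nsmul_eq_mul]
      congr 1
      simp [mul_ite, Finset.sum_ite_eq]
    rw [rdeg]
    simp only [hres]
    rw [Fintype.sum_prod_type]
    simp only [PrismAux.Rm, PrismAux.genJ, PrismAux.Jn, PrismAux.sg, Matrix.kroneckerMap_apply,
      Matrix.add_apply, Matrix.smul_apply, Matrix.one_apply, Matrix.of_apply, smul_eq_mul]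
    rw [Finset.sum_congr rfl fun j _ => Fin.sum_univ_two _]
    fin_cases s <;>
      simp only [Fin.zero_eta, Fin.mk_one, show ((0:Fin 2) = 0) = True by simp,
        show ((0:Fin 2) = 1) = False by simp,
        show ((1:Fin 2) = 0) = False by simp, show ((1:Fin 2) = 1) = True by simp,
        if_true, if_false, mul_one, mul_zero, add_zero, zero_add] <;>
      rw [Finset.sum_add_distrib, key, key] <;>
      (simp only [PrismAux.al, PrismAux.be, PrismAux.ga]; field_simp; ring)
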